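/- Let A be the 5×5 matrix with rows (12, 13, 3, 10, 6), (13, 14, 4, 9, 5), (3, 4, 15, 11, 1), (10, 9, 11, 8, 2), (6, 5, 1, 2, 7). Then there is no real 5×5 matrix B with rank(B) ≤ 2 such that for every column j and all rows i, k, A_{ij} < A_{kj} ⇔ B_{ij} < B_{kj}. That is, the monotone rank (and hence the underlying rank) of A is at least 3, even though its Radon rank is 2. -/

import Mathlib

/-- The matrix of Proposition "rad_strict". -/
noncomputable def Arad : Matrix (Fin 5) (Fin 5) ℝ :=
  !![12, 13, 3, 10, 6;
     13, 14, 4, 9, 5;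
     3, 4, 15, 11, 1;
     10, 9, 11, 8, 2;
     6, 5, 1, 2, 7]

/-- If a product with a positive factor is negative, the other factor is negative. -/
private lemma neg_left_of_mul_neg {m b : ℝ} (h : m * b < 0) (hb : 0 < b) : m < 0 := by
  by_contra h'
  exact absurd h (not_lt.mpr (mul_nonneg (not_lt.mp h') hb.le))

/-- If a product with a positive factor is positive, the other factor is positive. -/
private lemma pos_left_of_mul_pos {m b : ℝ} (h : 0 < m * b) (hb : 0 < b) : 0 < m := by
  by_contra h'
  exact absurd h (not_lt.mpr (mul_nonpos_of_nonpos_of_nonneg (not_lt.mp h') hb.le))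

/-- If a product with a negative factor is positive, the other factor is negative. -/
private lemma neg_left_of_mul_pos {m b : ℝ} (h : 0 < m * b) (hb : b < 0) : m < 0 := by
  by_contra h'
  exact absurd h (not_lt.mpr (mul_nonpos_of_nonneg_of_nonpos (not_lt.mp h') hb.le))

/-- If a product with a negative factor is negative, the other factor is positive. -/
private lemma pos_left_of_mul_neg {m b : ℝ} (h : m * b < 0) (hb : b < 0) : 0 < m := by
  by_contra h'
  exact absurd h (not_lt.mpr (mul_nonneg_of_nonpos_of_nonpos (not_lt.mp h') hb.le))

/-- Sign certificate: if `(l, m, n)` is orthogonal to four vectors lying in the four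
open "quadrant" sign patterns `(+,+,+)`, `(-,-,+)`, `(-,+,+)`, `(+,-,+)`, then it is zero. -/
lemma rad_key {l m n a1 b1 c1 a2 b2 c2 a3 b3 c3 a4 b4 c4 : ℝ}
    (ha1 : 0 < a1) (hb1 : 0 < b1) (hc1 : 0 < c1)
    (ha2 : a2 < 0) (hb2 : b2 < 0) (hc2 : 0 < c2)
    (ha3 : a3 < 0) (hb3 : 0 < b3) (hc3 : 0 < c3)
    (ha4 : 0 < a4) (hb4 : b4 < 0) (hc4 : 0 < c4)
    (e1 : l * a1 + m * b1 + n * c1 = 0)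
    (e2 : l * a2 + m * b2 + n * c2 = 0)
    (e3 : l * a3 + m * b3 + n * c3 = 0)
    (e4 : l * a4 + m * b4 + n * c4 = 0) :
    l = 0 ∧ m = 0 ∧ n = 0 := by
  rcases lt_trichotomy n 0 with hn | hn | hn
  · rcases lt_trichotomy l 0 with hl | hl | hl
    · -- l < 0, n < 0 : from e4, m < 0; then e1 is a sum of negatives
      have hm : m < 0 := neg_left_of_mul_pos
        (by linarith [mul_neg_of_neg_of_pos hl ha4, mul_neg_of_neg_of_pos hn hc4]) hb4
      linarith [mul_neg_of_neg_of_pos hl ha1, mul_neg_of_neg_of_pos hm hb1,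
        mul_neg_of_neg_of_pos hn hc1]
    · -- l = 0, n < 0 : from e1, m > 0; then e4 is a sum of negatives
      subst hl
      have hm : 0 < m := pos_left_of_mul_pos
        (by linarith [mul_neg_of_neg_of_pos hn hc1]) hb1
      linarith [mul_neg_of_pos_of_neg hm hb4, mul_neg_of_neg_of_pos hn hc4]
    · -- l > 0, n < 0 : from e3, m > 0; then e2 is a sum of negatives
      have hm : 0 < m := pos_left_of_mul_pos
        (by linarith [mul_neg_of_pos_of_neg hl ha3, mul_neg_of_neg_of_pos hn hc3]) hb3
      linarith [mul_neg_of_pos_of_neg hl ha2, mul_neg_of_pos_of_neg hm hb2,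
        mul_neg_of_neg_of_pos hn hc2]
  · subst hn
    rcases lt_trichotomy l 0 with hl | hl | hl
    · -- l < 0, n = 0 : from e1, m > 0; then e4 < 0
      have hm : 0 < m := pos_left_of_mul_pos
        (by linarith [mul_neg_of_neg_of_pos hl ha1]) hb1
      linarith [mul_neg_of_neg_of_pos hl ha4, mul_neg_of_pos_of_neg hm hb4]
    · -- l = 0, n = 0 : e1 forces m = 0
      subst hl
      refine ⟨rfl, ?_, rfl⟩
      have h : m * b1 = 0 := by linarith
      rcases mul_eq_zero.mp h with h | h
      · exact h
      · exact absurd h (ne_of_gt hb1)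
    · -- l > 0, n = 0 : from e1, m < 0; then e3 < 0
      have hm : m < 0 := neg_left_of_mul_neg
        (by linarith [mul_pos hl ha1]) hb1
      linarith [mul_neg_of_pos_of_neg hl ha3, mul_neg_of_neg_of_pos hm hb3]
  · rcases lt_trichotomy l 0 with hl | hl | hl
    · -- l < 0, n > 0 : from e3, m < 0; then e2 is a sum of positives
      have hm : m < 0 := neg_left_of_mul_neg
        (by linarith [mul_pos_of_neg_of_neg hl ha3, mul_pos hn hc3]) hb3
      linarith [mul_pos_of_neg_of_neg hl ha2, mul_pos_of_neg_of_neg hm hb2,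
        mul_pos hn hc2]
    · -- l = 0, n > 0 : from e1, m < 0; then e2 is a sum of positives
      subst hl
      have hm : m < 0 := neg_left_of_mul_neg
        (by linarith [mul_pos hn hc1]) hb1
      linarith [mul_pos_of_neg_of_neg hm hb2, mul_pos hn hc2]
    · -- l > 0, n > 0 : from e4, m > 0; then e1 is a sum of positives
      have hm : 0 < m := pos_left_of_mul_neg
        (by linarith [mul_pos hl ha4, mul_pos hn hc4]) hb4
      linarith [mul_pos hl ha1, mul_pos hm hb1, mul_pos hn hc1]

/-- No matrix of rank at most 2 has, in every column, the same order of entries as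
`Arad`: the monotone rank (hence the underlying rank) of `Arad` is at least 3. -/
theorem stmt19 :
    ¬ ∃ B : Matrix (Fin 5) (Fin 5) ℝ, B.rank ≤ 2 ∧
      ∀ j i k, Arad i j < Arad k j ↔ B i j < B k j := by
  rintro ⟨B, hrank, hord⟩
  -- the three relevant columns of `B`, as vectors
  set c0 : Fin 5 → ℝ := fun i => B i 0 with hc0
  set c2 : Fin 5 → ℝ := fun i => B i 2 with hc2
  set c3 : Fin 5 → ℝ := fun i => B i 3 with hc3
  have hmem : ∀ j : Fin 5, (fun i => B i j) ∈ LinearMap.range B.mulVecLin := by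
    intro j
    refine ⟨Pi.single j 1, ?_⟩
    ext i
    simp [Matrix.mulVecLin_apply]
  -- the columns are linearly dependent since the rank is at most 2
  have hnli : ¬ LinearIndependent ℝ ![c0, c2, c3] := by
    intro hli
    have h3 : Module.finrank ℝ (Submodule.span ℝ (Set.range ![c0, c2, c3])) = 3 := by
      rw [finrank_span_eq_card hli]
      simp
    have hle : Submodule.span ℝ (Set.range ![c0, c2, c3]) ≤ LinearMap.range B.mulVecLin := by
      rw [Submodule.span_le]
      rintro x ⟨i, rfl⟩
      fin_cases i
      · exact hmem 0
      · exact hmem 2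
      · exact hmem 3
    have hmono := Submodule.finrank_mono hle
    rw [h3] at hmono
    have : (3 : ℕ) ≤ 2 := le_trans hmono hrank
    omega
  obtain ⟨g, hsum, i0, hgi⟩ := Fintype.not_linearIndependent_iff.mp hnli
  have hrow : ∀ i : Fin 5, g 0 * B i 0 + g 1 * B i 2 + g 2 * B i 3 = 0 := by
    intro i
    have h := congrFun hsum i
    simp only [Fin.sum_univ_three, Matrix.cons_val_zero, Matrix.cons_val_one, Matrix.head_cons,
      Matrix.cons_val_two, Matrix.tail_cons, Pi.add_apply, Pi.smul_apply, smul_eq_mul,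
      Pi.zero_apply, hc0, hc2, hc3] at h
    linarith [h]
  -- the twelve order constraints coming from columns 0, 2, 3 of `Arad`
  have h150 : B 4 0 < B 0 0 := (hord 0 4 0).mp (by simp [Arad] <;> norm_num)
  have h152 : B 4 2 < B 0 2 := (hord 2 4 0).mp (by simp [Arad] <;> norm_num)
  have h153 : B 4 3 < B 0 3 := (hord 3 4 0).mp (by simp [Arad] <;> norm_num)
  have h120 : B 0 0 < B 1 0 := (hord 0 0 1).mp (by simp [Arad] <;> norm_num)
  have h122 : B 0 2 < B 1 2 := (hord 2 0 1).mp (by simp [Arad] <;> norm_num)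
  have h123 : B 1 3 < B 0 3 := (hord 3 1 0).mp (by simp [Arad] <;> norm_num)
  have h340 : B 2 0 < B 3 0 := (hord 0 2 3).mp (by simp [Arad] <;> norm_num)
  have h342 : B 3 2 < B 2 2 := (hord 2 3 2).mp (by simp [Arad] <;> norm_num)
  have h343 : B 3 3 < B 2 3 := (hord 3 3 2).mp (by simp [Arad] <;> norm_num)
  have h140 : B 3 0 < B 0 0 := (hord 0 3 0).mp (by simp [Arad] <;> norm_num)
  have h142 : B 0 2 < B 3 2 := (hord 2 0 3).mp (by simp [Arad] <;> norm_num)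
  have h143 : B 3 3 < B 0 3 := (hord 3 3 0).mp (by simp [Arad] <;> norm_num)
  -- the four difference equations
  have e1 : g 0 * (B 0 0 - B 4 0) + g 1 * (B 0 2 - B 4 2) + g 2 * (B 0 3 - B 4 3) = 0 := by
    linear_combination hrow 0 - hrow 4
  have e2 : g 0 * (B 0 0 - B 1 0) + g 1 * (B 0 2 - B 1 2) + g 2 * (B 0 3 - B 1 3) = 0 := by
    linear_combination hrow 0 - hrow 1
  have e3 : g 0 * (B 2 0 - B 3 0) + g 1 * (B 2 2 - B 3 2) + g 2 * (B 2 3 - B 3 3) = 0 := by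
    linear_combination hrow 2 - hrow 3
  have e4 : g 0 * (B 0 0 - B 3 0) + g 1 * (B 0 2 - B 3 2) + g 2 * (B 0 3 - B 3 3) = 0 := by
    linear_combination hrow 0 - hrow 3
  obtain ⟨hg0, hg1, hg2⟩ := rad_key (l := g 0) (m := g 1) (n := g 2)
    (by linarith : (0:ℝ) < B 0 0 - B 4 0) (by linarith : (0:ℝ) < B 0 2 - B 4 2)
    (by linarith : (0:ℝ) < B 0 3 - B 4 3)
    (by linarith : B 0 0 - B 1 0 < 0) (by linarith : B 0 2 - B 1 2 < 0)
    (by linarith : (0:ℝ) < B 0 3 - B 1 3)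
    (by linarith : B 2 0 - B 3 0 < 0) (by linarith : (0:ℝ) < B 2 2 - B 3 2)
    (by linarith : (0:ℝ) < B 2 3 - B 3 3)
    (by linarith : (0:ℝ) < B 0 0 - B 3 0) (by linarith : B 0 2 - B 3 2 < 0)
    (by linarith : (0:ℝ) < B 0 3 - B 3 3)
    e1 e2 e3 e4
  fin_cases i0
  · exact hgi hg0
  · exact hgi hg1
  · exact hgi hg2
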